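/- Let G be a group of order 9pq where p and q are distinct odd primes both different from 3. Then G has a normal subgroup of order pq, and consequently the commutator subgroup [G,G] has order dividing pq. -/

import Mathlib

theorem dvd_nine_cases (f : ℕ) (h : f ∣ 9) : f = 1 ∨ f = 3 ∨ f = 9 := by
  have hle := Nat.le_of_dvd (by norm_num) h
  interval_cases f <;> revert h <;> decide

theorem prime_dvd_eight (r : ℕ) (hr : r.Prime) (h : r ∣ 8) : r = 2 := by
  have hle := Nat.le_of_dvd (by norm_num) h
  interval_cases r <;> revert h hr <;> decide

theorem prime_dvd_six (r : ℕ) (hr : r.Prime) (h : r ∣ 6) : r = 2 ∨ r = 3 := by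
  have hle := Nat.le_of_dvd (by norm_num) h
  interval_cases r <;> revert h hr <;> decide

/-- A nontrivial automorphism of a group of order 9 has order with a prime divisor in {2,3};
more precisely any automorphism of prime order r of a group of order 9 has r = 2 or r = 3. -/
theorem aut_nine_prime_order {P : Type*} [Group P] [Finite P] (h9 : Nat.card P = 9)
    {σ : MulAut P} {r : ℕ} (hr : r.Prime) (ho : orderOf σ = r) : r = 2 ∨ r = 3 := by
  haveI : Fact r.Prime := ⟨hr⟩
  set H : Subgroup (MulAut P) := Subgroup.zpowers σ with hH
  have hcardH : Nat.card H = r := by rw [Nat.card_zpowers, ho]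
  have hPH : IsPGroup r H := IsPGroup.of_card (by rw [hcardH, pow_one])
  -- fixed points of the action of H on P form a subgroup
  have hmem : ∀ x : P, x ∈ MulAction.fixedPoints H P ↔ σ x = x := by
    intro x
    constructor
    · intro h
      have := h ⟨σ, Subgroup.mem_zpowers σ⟩
      simpa using this
    · intro h g
      obtain ⟨n, hn⟩ := g.2
      have hpow : ∀ m : ℕ, (σ ^ m) x = x := by
        intro m
        induction m with
        | zero => simp
        | succ k ih => rw [pow_succ, MulAut.mul_apply, h, ih]
      have : ∀ m : ℤ, (σ ^ m) x = x := by
        intro m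
        cases m with
        | ofNat k => rw [Int.ofNat_eq_coe, zpow_natCast]; exact hpow k
        | negSucc k =>
            rw [zpow_negSucc]
            have := hpow (k + 1)
            nth_rewrite 1 [← this]
            exact MulAut.inv_apply_self P (σ ^ (k + 1)) x
      have hg : (g : MulAut P) x = x := by rw [← hn]; exact this n
      simpa [Subgroup.smul_def, MulAut.smul_def] using hg
  let S : Subgroup P :=
    { carrier := MulAction.fixedPoints H P
      one_mem' := (hmem 1).mpr (map_one σ)
      mul_mem' := fun {a b} ha hb => (hmem _).mpr (by
        rw [map_mul, (hmem a).mp ha, (hmem b).mp hb])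
      inv_mem' := fun {a} ha => (hmem _).mpr (by
        rw [map_inv, (hmem a).mp ha]) }
  have hSf : Nat.card S = Nat.card (MulAction.fixedPoints H P) := rfl
  have hdvd : Nat.card S ∣ 9 := h9 ▸ Subgroup.card_subgroup_dvd_card S
  have hmod : (9 : ℕ) ≡ Nat.card S [MOD r] := by
    rw [hSf, ← h9]; exact hPH.card_modEq_card_fixedPoints P
  have h139 := dvd_nine_cases _ hdvd
  rcases h139 with h1 | h3 | hfull
  · -- 9 ≡ 1 mod r, so r ∣ 8, r = 2
    rw [h1] at hmod
    exact Or.inl (prime_dvd_eight r hr ((Nat.modEq_iff_dvd' (by norm_num)).mp hmod.symm))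
  · rw [h3] at hmod
    exact prime_dvd_six r hr ((Nat.modEq_iff_dvd' (by norm_num)).mp hmod.symm)
  · -- all points fixed: σ = 1, contradiction with orderOf σ = r prime
    exfalso
    have hStop : S = ⊤ := Subgroup.eq_top_of_card_eq S (by rw [hfull, h9])
    have : σ = 1 := by
      ext x
      have hx : x ∈ S := hStop ▸ Subgroup.mem_top x
      exact (hmem x).mp hx
    rw [this, orderOf_one] at ho
    exact hr.one_lt.ne' ho.symm

/-- A group of order `9pq`, with `p, q` distinct primes different from 2 and 3,
has a normal subgroup of order `pq`, and hence `|[G,G]|` divides `pq`. -/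
theorem stmt_8 {G : Type*} [Group G] (p q : ℕ)
    (hp : p.Prime) (hq : q.Prime) (hpq : p ≠ q)
    (hp2 : p ≠ 2) (hp3 : p ≠ 3) (hq2 : q ≠ 2) (hq3 : q ≠ 3)
    (hcard : Nat.card G = 9 * p * q) :
    (∃ N : Subgroup G, N.Normal ∧ Nat.card N = p * q) ∧
      Nat.card (commutator G) ∣ p * q := by
  have hG0 : Nat.card G ≠ 0 := by
    rw [hcard]
    exact Nat.mul_ne_zero (Nat.mul_ne_zero (by norm_num) hp.pos.ne') hq.pos.ne' 
  haveI : Finite G := Nat.finite_of_card_ne_zero hG0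
  haveI : Fact (Nat.Prime 3) := ⟨Nat.prime_three⟩
  have h3p : ¬ (3 ∣ p) := fun h => hp3 ((Nat.prime_dvd_prime_iff_eq Nat.prime_three hp).mp h).symm
  have h3q : ¬ (3 ∣ q) := fun h => hq3 ((Nat.prime_dvd_prime_iff_eq Nat.prime_three hq).mp h).symm
  obtain ⟨P⟩ : Nonempty (Sylow 3 G) := inferInstance
  -- the Sylow 3-subgroup has order 9
  have hfact : (Nat.card G).factorization 3 = 2 := by
    rw [hcard, show 9 * p * q = 3 ^ 2 * (p * q) by ring,
      Nat.factorization_mul (by norm_num) (Nat.mul_ne_zero hp.pos.ne' hq.pos.ne')]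
    simp only [Finsupp.coe_add, Pi.add_apply]
    rw [Nat.Prime.factorization_pow Nat.prime_three,
      Nat.factorization_eq_zero_of_not_dvd (by
        rw [Nat.Prime.dvd_mul Nat.prime_three]; tauto)]
    simp
  have hcardP : Nat.card (P : Subgroup G) = 9 := by
    rw [P.card_eq_multiplicity, hfact]; norm_num
  have hcommP : ∀ a b : (P : Subgroup G), a * b = b * a :=
    IsPGroup.commutative_of_card_eq_prime_sq (p := 3) (by rw [hcardP]; norm_num)
  -- the conjugation action of the normalizer on P
  set φ := Subgroup.normalizerMonoidHom (P : Subgroup G) with hφ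
  -- card of range divides p * q
  have hker9 : (9 : ℕ) ∣ Nat.card φ.ker := by
    have hle : (P : Subgroup G).subgroupOf (Subgroup.normalizer ((P : Subgroup G) : Set G)) ≤ φ.ker := by
      rw [Subgroup.normalizerMonoidHom_ker]
      intro x hx
      rw [Subgroup.mem_subgroupOf] at hx ⊢
      rw [Subgroup.mem_centralizer_iff]
      intro y hy
      have := hcommP ⟨y, hy⟩ ⟨(x : G), hx⟩
      simpa [Subtype.ext_iff] using this
    have h9 : Nat.card ((P : Subgroup G).subgroupOf (Subgroup.normalizer ((P : Subgroup G) : Set G))) = 9 := by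
      rw [← hcardP]
      exact Nat.card_congr (Subgroup.subgroupOfEquivOfLe Subgroup.le_normalizer).toEquiv
    exact h9 ▸ Subgroup.card_dvd_of_le hle
  have hrange_dvd : Nat.card φ.range ∣ p * q := by
    have h1 : Nat.card (Subgroup.normalizer ((P : Subgroup G) : Set G))
        = Nat.card φ.range * Nat.card φ.ker := by
      rw [Subgroup.card_eq_card_quotient_mul_card_subgroup φ.ker]
      congr 1
      exact Nat.card_congr (QuotientGroup.quotientKerEquivRange φ).toEquiv
    have h2 : Nat.card (Subgroup.normalizer ((P : Subgroup G) : Set G)) ∣ 9 * (p * q) := by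
      have := Subgroup.card_subgroup_dvd_card (Subgroup.normalizer ((P : Subgroup G) : Set G))
      rwa [hcard, show 9 * p * q = 9 * (p * q) by ring] at this
    obtain ⟨t, ht⟩ := hker9
    rw [h1, ht] at h2
    have h3 : 9 * (Nat.card φ.range * t) ∣ 9 * (p * q) := by
      rwa [show 9 * (Nat.card φ.range * t) = Nat.card φ.range * (9 * t) by ring]
    have h4 : Nat.card φ.range * t ∣ p * q :=
      (mul_dvd_mul_iff_left (by norm_num : (9:ℕ) ≠ 0)).mp h3
    exact dvd_trans (Dvd.intro t rfl) h4
  -- the range is trivial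
  have hrange : φ.range = ⊥ := by
    by_contra hne
    have hcard1 : Nat.card φ.range ≠ 1 := fun h => hne (Subgroup.card_eq_one.mp h)
    obtain ⟨r, hr, hrdvd⟩ := Nat.exists_prime_and_dvd hcard1
    haveI : Fact r.Prime := ⟨hr⟩
    haveI : Fintype φ.range := Fintype.ofFinite _
    obtain ⟨σ', hσ'⟩ := exists_prime_orderOf_dvd_card (G := φ.range) r (by rwa [← Nat.card_eq_fintype_card])
    have hordσ : orderOf (σ' : MulAut (P : Subgroup G)) = r := by
      rw [← hσ']
      exact Subgroup.orderOf_coe σ'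
    have hr23 := aut_nine_prime_order hcardP hr hordσ
    have hrpq : r = p ∨ r = q := by
      have := hrdvd.trans hrange_dvd
      rcases (Nat.Prime.dvd_mul hr).mp this with h | h
      · exact Or.inl ((Nat.prime_dvd_prime_iff_eq hr hp).mp h)
      · exact Or.inr ((Nat.prime_dvd_prime_iff_eq hr hq).mp h)
    rcases hrpq with rfl | rfl <;> rcases hr23 with h | h <;> tauto
  -- hence the normalizer is contained in the centralizer
  have hP : (Subgroup.normalizer ((P : Subgroup G) : Set G)) ≤ Subgroup.centralizer (P : Set G) := by
    have hker : φ.ker = ⊤ := by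
      ext x
      simp only [Subgroup.mem_top, iff_true, MonoidHom.mem_ker]
      have : φ x ∈ φ.range := ⟨x, rfl⟩
      rwa [hrange, Subgroup.mem_bot] at this
    rw [Subgroup.normalizerMonoidHom_ker] at hker
    exact Subgroup.subgroupOf_eq_top.mp hker
  -- Burnside's normal p-complement theorem
  set N := (MonoidHom.transferSylow P hP).ker with hN
  have hNnormal : N.Normal := MonoidHom.normal_ker _
  have hcompl := MonoidHom.ker_transferSylow_isComplement' P hP
  have hNcard : Nat.card N = p * q := by
    have := hcompl.card_mul
    rw [hcardP, hcard] at this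
    have h9 : Nat.card N * 9 = (p * q) * 9 := by rw [this]; ring
    exact Nat.eq_of_mul_eq_mul_right (by norm_num) h9
  refine ⟨⟨N, hNnormal, hNcard⟩, ?_⟩
  -- the quotient has order 9, hence is abelian
  have hquot : Nat.card (G ⧸ N) = 9 := by
    have hindex : N.index * Nat.card N = Nat.card G := N.index_mul_card
    rw [hNcard, hcard] at hindex
    have : N.index * (p * q) = 9 * (p * q) := by rw [hindex]; ring
    have hpq0 : p * q ≠ 0 := Nat.mul_ne_zero hp.pos.ne' hq.pos.ne' 
    have := Nat.eq_of_mul_eq_mul_right (Nat.pos_of_ne_zero hpq0) this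
    rw [← this]; rfl
  have habel : ∀ a b : G ⧸ N, a * b = b * a :=
    IsPGroup.commutative_of_card_eq_prime_sq (p := 3) (by rw [hquot]; norm_num)
  have hcomm_le : commutator G ≤ N := by
    rw [commutator, Subgroup.commutator_le]
    intro g₁ _ g₂ _
    rw [← QuotientGroup.eq_one_iff]
    open scoped commutatorElement in
    have : ((⁅g₁, g₂⁆ : G) : G ⧸ N) = ⁅(g₁ : G ⧸ N), (g₂ : G ⧸ N)⁆ := by
      simp [commutatorElement_def]
    rw [this, commutatorElement_eq_one_iff_mul_comm]
    exact habel _ _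
  exact hNcard ▸ Subgroup.card_dvd_of_le hcomm_le
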